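/- Let c₁₂, c₁₃, c₂₃ > 0, k ∈ ℝ, L > 0 and λ₀ = (c₁₃ k)²/c₂₃ − 4π²c₁₂/L², and assume λ₀ > 0. Then the function w*(t) = ( (c₁₃ k L)/(2 c₂₃ π) (1 − cos(2πt/L)), 0, −sin(2πt/L) ) solves the linear ODE system c₂₃ w₁″ + c₁₃ k w₃′ = 0, c₁₃ w₂″ − λ₀ w₂ = 0, c₁₂ w₃″ − c₁₃ k w₁′ − λ₀ w₃ = 0 on [0,L], with w*(0) = w*(L) = 0. -/

import Mathlib

open Real

theorem wstar_solves_linearized_system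
    (c₁₂ c₁₃ c₂₃ k L : ℝ) (h12 : 0 < c₁₂) (h13 : 0 < c₁₃) (h23 : 0 < c₂₃)
    (hL : 0 < L)
    (lam0 : ℝ) (hlam : lam0 = (c₁₃ * k)^2 / c₂₃ - 4 * π^2 * c₁₂ / L^2)
    (hpos : 0 < lam0)
    (w₁ w₂ w₃ : ℝ → ℝ)
    (hw₁ : w₁ = fun t => (c₁₃ * k * L) / (2 * c₂₃ * π) * (1 - cos (2 * π * t / L)))
    (hw₂ : w₂ = fun _ => (0:ℝ))
    (hw₃ : w₃ = fun t => -sin (2 * π * t / L)) :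
    (w₁ 0 = 0 ∧ w₂ 0 = 0 ∧ w₃ 0 = 0) ∧
    (w₁ L = 0 ∧ w₂ L = 0 ∧ w₃ L = 0) ∧
    ∀ t ∈ Set.Icc (0:ℝ) L,
      c₂₃ * deriv (deriv w₁) t + c₁₃ * k * deriv w₃ t = 0 ∧
      c₁₃ * deriv (deriv w₂) t - lam0 * w₂ t = 0 ∧
      c₁₂ * deriv (deriv w₃) t - c₁₃ * k * deriv w₁ t - lam0 * w₃ t = 0 := by
  have hLne : L ≠ 0 := ne_of_gt hL
  have hπ : (π:ℝ) ≠ 0 := Real.pi_ne_zero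
  have h23ne : c₂₃ ≠ 0 := ne_of_gt h23
  set A : ℝ := 2 * π / L with hA
  set C : ℝ := (c₁₃ * k * L) / (2 * c₂₃ * π) with hC
  have hg : ∀ t : ℝ, HasDerivAt (fun t : ℝ => 2 * π * t / L) A t := by
    intro t
    have := ((hasDerivAt_id t).const_mul (2 * π)).div_const L
    simpa [hA] using this
  have hcosd : ∀ t : ℝ, HasDerivAt (fun t : ℝ => cos (2 * π * t / L))
      (-sin (2 * π * t / L) * A) t := fun t =>
    (Real.hasDerivAt_cos _).comp t (hg t)
  have hsind : ∀ t : ℝ, HasDerivAt (fun t : ℝ => sin (2 * π * t / L))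
      (cos (2 * π * t / L) * A) t := fun t =>
    (Real.hasDerivAt_sin _).comp t (hg t)
  have hw1d : deriv w₁ = fun t => C * A * sin (2 * π * t / L) := by
    funext t
    rw [hw₁]
    have h := (((hasDerivAt_const t (1:ℝ)).sub (hcosd t)).const_mul C)
    have h' : HasDerivAt (fun t => C * (1 - cos (2 * π * t / L)))
        (C * A * sin (2 * π * t / L)) t := by
      exact h.congr_deriv (by ring)
    exact h'.deriv
  have hw1dd : ∀ t : ℝ, deriv (deriv w₁) t = C * A * A * cos (2 * π * t / L) := by
    intro t
    rw [hw1d]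
    have h := (hsind t).const_mul (C * A)
    have h' : HasDerivAt (fun t => C * A * sin (2 * π * t / L))
        (C * A * A * cos (2 * π * t / L)) t := by
      exact h.congr_deriv (by ring)
    exact h'.deriv
  have hw3d : deriv w₃ = fun t => -(A * cos (2 * π * t / L)) := by
    funext t
    rw [hw₃]
    have h := (hsind t).neg
    have h' : HasDerivAt (fun t => -sin (2 * π * t / L))
        (-(A * cos (2 * π * t / L))) t := by
      exact h.congr_deriv (by ring)
    exact h'.deriv
  have hw3dd : ∀ t : ℝ, deriv (deriv w₃) t = A * A * sin (2 * π * t / L) := by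
    intro t
    rw [hw3d]
    have h := ((hcosd t).const_mul A).neg
    have h' : HasDerivAt (fun t => -(A * cos (2 * π * t / L)))
        (A * A * sin (2 * π * t / L)) t := by
      exact h.congr_deriv (by ring)
    exact h'.deriv
  have hw2d : deriv (deriv w₂) = fun _ => (0:ℝ) := by
    rw [hw₂]; simp
  have hCA : c₂₃ * (C * A) = c₁₃ * k := by
    rw [hC, hA]; field_simp
  have hA2 : A * A = 4 * π ^ 2 / L ^ 2 := by
    rw [hA]; field_simp; ring
  refine ⟨?_, ?_, ?_⟩
  · subst hw₁ hw₂ hw₃; norm_num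
  · subst hw₁ hw₂ hw₃
    simp only [mul_div_assoc, div_self hLne]
    norm_num [Real.cos_two_pi, Real.sin_two_pi]
  · intro t _
    refine ⟨?_, ?_, ?_⟩
    · rw [hw1dd, hw3d]
      have : c₂₃ * (C * A * A * cos (2 * π * t / L)) =
          (c₂₃ * (C * A)) * A * cos (2 * π * t / L) := by ring
      rw [this, hCA]; ring
    · rw [hw2d, hw₂]; simp
    · rw [hw3dd, hw1d, hw₃, hlam]
      have hD : C * A = c₁₃ * k / c₂₃ := by
        rw [hC, hA]; field_simp
      rw [hD, hA2]
      field_simp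
      ring
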